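/- For integers m ≥ 1, n ≥ 0, and k ≥ 0: sum over l from 0 to n of binomial(n,l) · C(l, k; m) = sum over j from 0 to n of 2^(n-j) · binomial(n,j) · C(j, k-j; m-1), where C(j, i; 0) = 1 if i = 0 and 0 otherwise, and terms with negative indices are 0. -/

import Mathlib

open Polynomial Finset

/-- Polynomial (extended binomial) coefficient: the coefficient of `t^k` in
`(1 + t + ⋯ + t^m)^n`, defined to be `0` for negative `k`. -/
noncomputable def pc (m n : ℕ) (k : ℤ) : ℤ :=
  if 0 ≤ k then
    ((∑ i ∈ Finset.range (m + 1), (Polynomial.X : Polynomial ℤ) ^ i) ^ n).coeff k.toNat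
  else 0

theorem pc_binom_sum (m n k : ℕ) (hm : 1 ≤ m) :
    ∑ l ∈ Finset.range (n + 1), (Nat.choose n l : ℤ) * pc m l k =
      ∑ j ∈ Finset.range (n + 1), 2 ^ (n - j) * (Nat.choose n j : ℤ) * pc (m - 1) j ((k : ℤ) - j) := by
  have hm1 : m - 1 + 1 = m := Nat.succ_pred_eq_of_pos hm
  set P : Polynomial ℤ := ∑ i ∈ Finset.range (m + 1), X ^ i with hPdef
  set Q : Polynomial ℤ := ∑ i ∈ Finset.range m, X ^ i with hQdef
  have hPQ : P + 1 = Q * X + 2 := by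
    rw [hPdef, hQdef, Finset.sum_range_succ', Finset.sum_mul]
    simp [pow_succ]
    ring
  have key : (((P + 1) ^ n).coeff k) = (((Q * X + 2) ^ n).coeff k) := by rw [hPQ]
  rw [add_pow, add_pow, Polynomial.finset_sum_coeff, Polynomial.finset_sum_coeff] at key
  have hL : ∀ l, (P ^ l * 1 ^ (n - l) * (Nat.choose n l : Polynomial ℤ)).coeff k
      = (Nat.choose n l : ℤ) * pc m l k := by
    intro l
    rw [one_pow, mul_one, ← Polynomial.C_eq_natCast, Polynomial.coeff_mul_C]
    simp [pc, hPdef, mul_comm]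
  have hR : ∀ j, ((Q * X) ^ j * 2 ^ (n - j) * (Nat.choose n j : Polynomial ℤ)).coeff k
      = 2 ^ (n - j) * (Nat.choose n j : ℤ) * pc (m - 1) j ((k : ℤ) - j) := by
    intro j
    have h2 : (2 : Polynomial ℤ) ^ (n - j) = Polynomial.C (2 ^ (n - j)) := by
      simp
    rw [h2, ← Polynomial.C_eq_natCast, mul_pow, mul_assoc, ← Polynomial.C_mul,
      Polynomial.coeff_mul_C, Polynomial.coeff_mul_X_pow']
    rw [pc, hQdef, hm1]
    by_cases hjk : j ≤ k
    · have h1 : (0 : ℤ) ≤ (k : ℤ) - j := by omega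
      have h2' : ((k : ℤ) - j).toNat = k - j := by omega
      rw [if_pos hjk, if_pos h1, h2']
      ring
    · rw [if_neg hjk, if_neg (by omega)]
      ring
  calc ∑ l ∈ Finset.range (n + 1), (Nat.choose n l : ℤ) * pc m l k
      = ∑ l ∈ Finset.range (n + 1),
          (P ^ l * 1 ^ (n - l) * (Nat.choose n l : Polynomial ℤ)).coeff k := by
        exact Finset.sum_congr rfl fun l _ => (hL l).symm
    _ = ∑ j ∈ Finset.range (n + 1),
          ((Q * X) ^ j * 2 ^ (n - j) * (Nat.choose n j : Polynomial ℤ)).coeff k := key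
    _ = ∑ j ∈ Finset.range (n + 1),
          2 ^ (n - j) * (Nat.choose n j : ℤ) * pc (m - 1) j ((k : ℤ) - j) :=
        Finset.sum_congr rfl fun j _ => hR j
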